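/- Assume u_a < 0 and u_b > 0. For every t > 0 and every x with a < x < c, the approximate velocity u^ε(x,t) tends to 0 and the approximate potential density R^ε(x,t) tends to ρ_c·(x − c) as ε → 0⁺; and for every x with c < x < b, u^ε(x,t) tends to 0 and R^ε(x,t) tends to 0 as ε → 0⁺. -/

import Mathlib

open Real Filter Topology

/-- The unnormalized complementary error function `erfc z = ∫_z^∞ e^{-s²} ds`. -/
noncomputable def erfc (z : ℝ) : ℝ := ∫ s in Set.Ioi z, Real.exp (-s ^ 2)

/-- The denominator `D(x,t,ε)` appearing in the Hopf–Cole formulas. -/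
noncomputable def D (a b u_a u_b x t ε : ℝ) : ℝ :=
  erfc ((x - a - u_a * t) / Real.sqrt (2 * t * ε))
      * Real.exp (((x - a - u_a * t) ^ 2 - (x - a) ^ 2) / (2 * t * ε))
    + erfc ((x - b) / Real.sqrt (2 * t * ε))
    - erfc ((x - a) / Real.sqrt (2 * t * ε))
    + erfc (-(x - b) / Real.sqrt (2 * t * ε)) * Real.exp (-u_b / ε)

/-- The approximate velocity `u^ε(x,t)`. -/
noncomputable def uEps (a b u_a u_b x t ε : ℝ) : ℝ :=
  (u_a * erfc ((x - a - u_a * t) / Real.sqrt (2 * t * ε))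
        * Real.exp (((x - a - u_a * t) ^ 2 - (x - a) ^ 2) / (2 * t * ε))
      + ε / Real.sqrt (2 * t * ε) * Real.exp (-(x - b) ^ 2 / (2 * t * ε))
          * (1 - Real.exp (-u_b / ε)))
    / D a b u_a u_b x t ε

/-- The approximate potential density `R^ε(x,t)`. -/
noncomputable def REps (a b c d u_a u_b ρ_c ρ_d x t ε : ℝ) : ℝ :=
  (t * ε / Real.sqrt (2 * t * ε) * ρ_c * Real.exp (-(x - a) ^ 2 / (2 * t * ε))
      + ρ_c * (x - c - u_a * t)
          * Real.exp (((x - a - u_a * t) ^ 2 - (x - a) ^ 2) / (2 * t * ε))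
          * erfc ((x - a - u_a * t) / Real.sqrt (2 * t * ε))
      + t * ε / Real.sqrt (2 * t * ε) * ρ_c
          * (Real.exp (-(x - a) ^ 2 / (2 * t * ε)) - Real.exp (-(x - c) ^ 2 / (2 * t * ε)))
      + ρ_c * (x - c)
          * (erfc ((x - c) / Real.sqrt (2 * t * ε)) - erfc ((x - a) / Real.sqrt (2 * t * ε)))
      + ρ_d * Real.exp (-u_b / ε) * erfc (-(x - d) / Real.sqrt (2 * t * ε)))
    / D a b u_a u_b x t ε

open MeasureTheory


lemma gauss_integrable : Integrable (fun s : ℝ => Real.exp (-s ^ 2)) := by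
  simpa using integrable_exp_neg_mul_sq (b := 1) one_pos

lemma gauss_integral : (∫ s : ℝ, Real.exp (-s ^ 2)) = Real.sqrt π := by
  simpa using integral_gaussian 1

lemma erfc_nonneg (z : ℝ) : 0 ≤ erfc z :=
  setIntegral_nonneg measurableSet_Ioi (fun s _ => (Real.exp_pos _).le)

lemma erfc_le_sqrt_pi (z : ℝ) : erfc z ≤ Real.sqrt π := by
  rw [← gauss_integral]
  exact setIntegral_le_integral gauss_integrable
    (Filter.Eventually.of_forall fun s => (Real.exp_pos _).le)

lemma erfc_le_exp {z : ℝ} (hz : 0 ≤ z) : erfc z ≤ Real.sqrt π * Real.exp (-z ^ 2) := by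
  have hint : Integrable (fun s : ℝ => Real.exp (-(s - z) ^ 2)) := by
    simpa using gauss_integrable.comp_sub_right z
  have h1 : erfc z ≤ ∫ s in Set.Ioi z, Real.exp (-z ^ 2) * Real.exp (-(s - z) ^ 2) := by
    apply setIntegral_mono_on gauss_integrable.integrableOn
      (hint.const_mul _).integrableOn measurableSet_Ioi
    intro s hs
    rw [← Real.exp_add]
    apply Real.exp_le_exp.2
    nlinarith [Set.mem_Ioi.1 hs]
  have h2 : (∫ s in Set.Ioi z, Real.exp (-(s - z) ^ 2)) ≤ Real.sqrt π := by
    rw [← gauss_integral]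
    calc (∫ s in Set.Ioi z, Real.exp (-(s - z) ^ 2)) ≤ ∫ s : ℝ, Real.exp (-(s - z) ^ 2) :=
          setIntegral_le_integral hint (Filter.Eventually.of_forall fun s => (Real.exp_pos _).le)
      _ = ∫ s : ℝ, Real.exp (-s ^ 2) := by
          simpa using integral_sub_right_eq_self (fun s : ℝ => Real.exp (-s ^ 2)) z
  calc erfc z ≤ ∫ s in Set.Ioi z, Real.exp (-z ^ 2) * Real.exp (-(s - z) ^ 2) := h1
    _ = Real.exp (-z ^ 2) * ∫ s in Set.Ioi z, Real.exp (-(s - z) ^ 2) := integral_const_mul _ _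
    _ ≤ Real.exp (-z ^ 2) * Real.sqrt π := by
        exact mul_le_mul_of_nonneg_left h2 (Real.exp_pos _).le
    _ = Real.sqrt π * Real.exp (-z ^ 2) := mul_comm _ _

lemma erfc_tendsto_atTop : Tendsto erfc atTop (𝓝 0) := by
  have hb : Tendsto (fun z : ℝ => Real.sqrt π * Real.exp (-z ^ 2)) atTop (𝓝 (Real.sqrt π * 0)) := by
    apply Tendsto.const_mul
    exact Real.tendsto_exp_atBot.comp (tendsto_neg_atTop_atBot.comp (tendsto_pow_atTop two_ne_zero))
  rw [mul_zero] at hb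
  refine tendsto_of_tendsto_of_tendsto_of_le_of_le' tendsto_const_nhds hb ?_ ?_
  · exact Eventually.of_forall fun z => erfc_nonneg z
  · filter_upwards [eventually_ge_atTop (0:ℝ)] with z hz using erfc_le_exp hz

lemma erfc_neg_eq (z : ℝ) : erfc (-z) = Real.sqrt π - erfc z := by
  have h1 : erfc (-z) = ∫ s in Set.Iic z, Real.exp (-s ^ 2) := by
    have := integral_comp_neg_Ioi (-z) (fun s : ℝ => Real.exp (-s ^ 2))
    simp only [neg_sq, neg_neg] at this
    rw [erfc, this]
  have h2 := intervalIntegral.integral_Iic_add_Ioi (b := z) (f := fun s : ℝ => Real.exp (-s ^ 2))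
    gauss_integrable.integrableOn gauss_integrable.integrableOn
  rw [gauss_integral] at h2
  rw [h1, erfc] at *
  linarith

lemma erfc_tendsto_atBot : Tendsto erfc atBot (𝓝 (Real.sqrt π)) := by
  have h : Tendsto (fun z : ℝ => Real.sqrt π - erfc (-z)) atBot (𝓝 (Real.sqrt π - 0)) :=
    tendsto_const_nhds.sub (erfc_tendsto_atTop.comp tendsto_neg_atBot_atTop)
  rw [sub_zero] at h
  exact h.congr fun z => by rw [erfc_neg_eq]; ring


section helpers
variable {t k : ℝ}

lemma tendsto_2te (ht : 0 < t) :
    Tendsto (fun ε : ℝ => 2 * t * ε) (𝓝[>] 0) (𝓝[>] 0) := by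
  rw [tendsto_nhdsWithin_iff]
  constructor
  · have : Tendsto (fun ε : ℝ => 2 * t * ε) (𝓝 0) (𝓝 (2 * t * 0)) :=
      tendsto_id.const_mul (2 * t)
    rw [mul_zero] at this
    exact this.mono_left nhdsWithin_le_nhds
  · filter_upwards [self_mem_nhdsWithin] with ε (hε : 0 < ε)
    exact Set.mem_Ioi.2 (by positivity)

lemma tendsto_sqrt2te (ht : 0 < t) :
    Tendsto (fun ε : ℝ => Real.sqrt (2 * t * ε)) (𝓝[>] 0) (𝓝[>] 0) := by
  rw [tendsto_nhdsWithin_iff]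
  constructor
  · have h0 : Tendsto (fun ε : ℝ => 2 * t * ε) (𝓝[>] 0) (𝓝 0) :=
      (tendsto_2te ht).mono_right nhdsWithin_le_nhds
    have := (Real.continuous_sqrt.tendsto 0).comp h0
    simpa [Function.comp_def] using this
  · filter_upwards [self_mem_nhdsWithin] with ε (hε : 0 < ε)
    exact Set.mem_Ioi.2 (Real.sqrt_pos.2 (by positivity))

lemma tendsto_div_sqrt_atTop (hk : 0 < k) (ht : 0 < t) :
    Tendsto (fun ε : ℝ => k / Real.sqrt (2 * t * ε)) (𝓝[>] 0) atTop := by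
  have h := (tendsto_inv_nhdsGT_zero.comp (tendsto_sqrt2te ht)).const_mul_atTop hk
  simpa [div_eq_mul_inv, Function.comp] using h

lemma tendsto_div_sqrt_atBot (hk : k < 0) (ht : 0 < t) :
    Tendsto (fun ε : ℝ => k / Real.sqrt (2 * t * ε)) (𝓝[>] 0) atBot := by
  have h := (tendsto_inv_nhdsGT_zero.comp (tendsto_sqrt2te ht)).const_mul_atTop_of_neg hk
  simpa [div_eq_mul_inv, Function.comp] using h

lemma tendsto_exp_div2te (hk : k < 0) (ht : 0 < t) :
    Tendsto (fun ε : ℝ => Real.exp (k / (2 * t * ε))) (𝓝[>] 0) (𝓝 0) := by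
  apply Real.tendsto_exp_atBot.comp
  have h := (tendsto_inv_nhdsGT_zero.comp (tendsto_2te ht)).const_mul_atTop_of_neg hk
  simpa [div_eq_mul_inv, Function.comp] using h

lemma tendsto_exp_div_eps (hk : k < 0) :
    Tendsto (fun ε : ℝ => Real.exp (k / ε)) (𝓝[>] 0) (𝓝 0) := by
  apply Real.tendsto_exp_atBot.comp
  have h := tendsto_inv_nhdsGT_zero.const_mul_atTop_of_neg hk
  exact h.congr fun ε => (div_eq_mul_inv k ε).symm

lemma tendsto_eps_div_sqrt (ht : 0 < t) :
    Tendsto (fun ε : ℝ => ε / Real.sqrt (2 * t * ε)) (𝓝[>] 0) (𝓝 0) := by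
  have heq : ∀ᶠ ε in 𝓝[>] (0:ℝ),
      Real.sqrt ε / Real.sqrt (2 * t) = ε / Real.sqrt (2 * t * ε) := by
    filter_upwards [self_mem_nhdsWithin] with ε (hε : 0 < ε)
    have h1 : Real.sqrt ε * Real.sqrt ε = ε := Real.mul_self_sqrt hε.le
    have h2 : (0:ℝ) < Real.sqrt ε := Real.sqrt_pos.2 hε
    have h3 : (0:ℝ) < Real.sqrt (2 * t) := Real.sqrt_pos.2 (by positivity)
    rw [Real.sqrt_mul (by positivity : (0:ℝ) ≤ 2 * t),
      div_eq_div_iff h3.ne' (by positivity)]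
    linear_combination Real.sqrt (2 * t) * h1
  have hs : Tendsto (fun ε : ℝ => Real.sqrt ε / Real.sqrt (2 * t)) (𝓝[>] 0) (𝓝 0) := by
    have := ((Real.continuous_sqrt.tendsto 0).mono_left
      (nhdsWithin_le_nhds (s := Set.Ioi (0:ℝ)))).div_const (Real.sqrt (2 * t))
    simpa using this
  exact hs.congr' heq

end helpers

section main
open Real Filter Topology MeasureTheory

variable {t : ℝ}

lemma tendsto_erfc_pos {k : ℝ} (hk : 0 < k) (ht : 0 < t) :
    Tendsto (fun ε : ℝ => erfc (k / Real.sqrt (2 * t * ε))) (𝓝[>] 0) (𝓝 0) :=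
  erfc_tendsto_atTop.comp (tendsto_div_sqrt_atTop hk ht)

lemma tendsto_erfc_neg {k : ℝ} (hk : k < 0) (ht : 0 < t) :
    Tendsto (fun ε : ℝ => erfc (k / Real.sqrt (2 * t * ε))) (𝓝[>] 0) (𝓝 (Real.sqrt π)) :=
  erfc_tendsto_atBot.comp (tendsto_div_sqrt_atBot hk ht)

lemma tendsto_key_prod {A B : ℝ} (hB : 0 < B) (hAB : B ≤ A) (ht : 0 < t) :
    Tendsto (fun ε : ℝ => erfc (A / Real.sqrt (2 * t * ε)) *
      Real.exp ((A ^ 2 - B ^ 2) / (2 * t * ε))) (𝓝[>] 0) (𝓝 0) := by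
  have hA : 0 < A := lt_of_lt_of_le hB hAB
  have hupper : ∀ᶠ ε in 𝓝[>] (0:ℝ),
      erfc (A / Real.sqrt (2 * t * ε)) * Real.exp ((A ^ 2 - B ^ 2) / (2 * t * ε))
        ≤ Real.sqrt π * Real.exp (-B ^ 2 / (2 * t * ε)) := by
    filter_upwards [self_mem_nhdsWithin] with ε (hε : 0 < ε)
    have hs : 0 < Real.sqrt (2 * t * ε) := Real.sqrt_pos.2 (by positivity)
    have h2 : (A / Real.sqrt (2 * t * ε)) ^ 2 = A ^ 2 / (2 * t * ε) := by
      rw [div_pow, Real.sq_sqrt (by positivity)]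
    have h1 : erfc (A / Real.sqrt (2 * t * ε))
        ≤ Real.sqrt π * Real.exp (-(A ^ 2 / (2 * t * ε)))  := by
      have := erfc_le_exp (z := A / Real.sqrt (2 * t * ε)) (by positivity)
      rwa [h2] at this
    calc erfc (A / Real.sqrt (2 * t * ε)) * Real.exp ((A ^ 2 - B ^ 2) / (2 * t * ε))
        ≤ (Real.sqrt π * Real.exp (-(A ^ 2 / (2 * t * ε))))
            * Real.exp ((A ^ 2 - B ^ 2) / (2 * t * ε)) :=
          mul_le_mul_of_nonneg_right h1 (Real.exp_pos _).le
      _ = Real.sqrt π * Real.exp (-B ^ 2 / (2 * t * ε)) := by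
          rw [mul_assoc, ← Real.exp_add]
          congr 1
          ring_nf
  have hlow : ∀ᶠ ε in 𝓝[>] (0:ℝ), (0:ℝ)
      ≤ erfc (A / Real.sqrt (2 * t * ε)) * Real.exp ((A ^ 2 - B ^ 2) / (2 * t * ε)) :=
    Eventually.of_forall fun ε => mul_nonneg (erfc_nonneg _) (Real.exp_pos _).le
  have hub : Tendsto (fun ε : ℝ => Real.sqrt π * Real.exp (-B ^ 2 / (2 * t * ε)))
      (𝓝[>] 0) (𝓝 (Real.sqrt π * 0)) :=
    (tendsto_exp_div2te (k := -B ^ 2) (by nlinarith) ht).const_mul _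
  rw [mul_zero] at hub
  exact tendsto_of_tendsto_of_tendsto_of_le_of_le' tendsto_const_nhds hub hlow hupper

lemma D_tendsto {a b u_a u_b x : ℝ} (hax : a < x) (hxb : x < b)
    (hua : u_a < 0) (hub : 0 < u_b) (ht : 0 < t) :
    Tendsto (fun ε : ℝ => D a b u_a u_b x t ε) (𝓝[>] 0) (𝓝 (Real.sqrt π)) := by
  have hB : (0:ℝ) < x - a := by linarith
  have hAB : x - a ≤ x - a - u_a * t := by nlinarith
  have h1 := tendsto_key_prod hB hAB ht
  have h2 := tendsto_erfc_neg (k := x - b) (by linarith) ht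
  have h3 := tendsto_erfc_pos (k := x - a) hB ht
  have h4 : Tendsto (fun ε : ℝ => erfc (-(x - b) / Real.sqrt (2 * t * ε))
      * Real.exp (-u_b / ε)) (𝓝[>] 0) (𝓝 (0 * 0)) :=
    (tendsto_erfc_pos (k := -(x - b)) (by linarith) ht).mul
      (tendsto_exp_div_eps (k := -u_b) (by linarith))
  rw [mul_zero] at h4
  have h := ((h1.add h2).sub h3).add h4
  rw [zero_add, sub_zero, add_zero] at h
  exact h.congr fun ε => by rw [D]

lemma sqrt_pi_ne : Real.sqrt π ≠ 0 := (Real.sqrt_pos.2 Real.pi_pos).ne'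

lemma uEps_tendsto {a b u_a u_b x : ℝ} (hax : a < x) (hxb : x < b)
    (hua : u_a < 0) (hub : 0 < u_b) (ht : 0 < t) :
    Tendsto (fun ε : ℝ => uEps a b u_a u_b x t ε) (𝓝[>] 0) (𝓝 0) := by
  have hB : (0:ℝ) < x - a := by linarith
  have hAB : x - a ≤ x - a - u_a * t := by nlinarith
  have h1 : Tendsto (fun ε : ℝ =>
      u_a * erfc ((x - a - u_a * t) / Real.sqrt (2 * t * ε))
        * Real.exp (((x - a - u_a * t) ^ 2 - (x - a) ^ 2) / (2 * t * ε))) (𝓝[>] 0) (𝓝 0) := by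
    have h := (tendsto_key_prod hB hAB ht).const_mul u_a
    rw [mul_zero] at h
    exact h.congr fun ε => by ring
  have h2 : Tendsto (fun ε : ℝ =>
      ε / Real.sqrt (2 * t * ε) * Real.exp (-(x - b) ^ 2 / (2 * t * ε))
        * (1 - Real.exp (-u_b / ε))) (𝓝[>] 0) (𝓝 (0 * 0 * (1 - 0))) :=
    ((tendsto_eps_div_sqrt ht).mul
      (tendsto_exp_div2te (k := -(x - b) ^ 2) (by nlinarith) ht)).mul
      (tendsto_const_nhds.sub (tendsto_exp_div_eps (k := -u_b) (by linarith)))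
  rw [show (0:ℝ) * 0 * (1 - 0) = 0 by ring] at h2
  have h := (h1.add h2).div (D_tendsto hax hxb hua hub ht) sqrt_pi_ne
  rw [zero_add, zero_div] at h
  exact h.congr fun ε => by simp only [Pi.div_apply]; rw [uEps]

lemma REps_tendsto {a b c d u_a u_b ρ_c ρ_d x L : ℝ} (hax : a < x) (hxb : x < b)
    (hbd : b < d) (hxc : x ≠ c) (hua : u_a < 0) (hub : 0 < u_b) (ht : 0 < t)
    (hL : Tendsto (fun ε : ℝ => erfc ((x - c) / Real.sqrt (2 * t * ε))) (𝓝[>] 0) (𝓝 L)) :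
    Tendsto (fun ε : ℝ => REps a b c d u_a u_b ρ_c ρ_d x t ε) (𝓝[>] 0)
      (𝓝 (ρ_c * (x - c) * L / Real.sqrt π)) := by
  have hB : (0:ℝ) < x - a := by linarith
  have hAB : x - a ≤ x - a - u_a * t := by nlinarith
  have hts : Tendsto (fun ε : ℝ => t * ε / Real.sqrt (2 * t * ε)) (𝓝[>] 0) (𝓝 0) := by
    have h := (tendsto_eps_div_sqrt ht).const_mul t
    rw [mul_zero] at h
    exact h.congr fun ε => by rw [mul_div_assoc]
  have h1 : Tendsto (fun ε : ℝ =>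
      t * ε / Real.sqrt (2 * t * ε) * ρ_c * Real.exp (-(x - a) ^ 2 / (2 * t * ε)))
      (𝓝[>] 0) (𝓝 (0 * ρ_c * 0)) :=
    (hts.mul_const ρ_c).mul (tendsto_exp_div2te (k := -(x - a) ^ 2) (by nlinarith) ht)
  rw [show (0:ℝ) * ρ_c * 0 = 0 by ring] at h1
  have h2 : Tendsto (fun ε : ℝ =>
      ρ_c * (x - c - u_a * t)
        * Real.exp (((x - a - u_a * t) ^ 2 - (x - a) ^ 2) / (2 * t * ε))
        * erfc ((x - a - u_a * t) / Real.sqrt (2 * t * ε))) (𝓝[>] 0) (𝓝 0) := by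
    have h := (tendsto_key_prod hB hAB ht).const_mul (ρ_c * (x - c - u_a * t))
    rw [mul_zero] at h
    exact h.congr fun ε => by ring
  have h3 : Tendsto (fun ε : ℝ =>
      t * ε / Real.sqrt (2 * t * ε) * ρ_c
        * (Real.exp (-(x - a) ^ 2 / (2 * t * ε)) - Real.exp (-(x - c) ^ 2 / (2 * t * ε))))
      (𝓝[>] 0) (𝓝 (0 * ρ_c * (0 - 0))) :=
    (hts.mul_const ρ_c).mul
      ((tendsto_exp_div2te (k := -(x - a) ^ 2) (by nlinarith) ht).sub
        (tendsto_exp_div2te (k := -(x - c) ^ 2)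
          (by nlinarith [sq_pos_of_ne_zero (sub_ne_zero.2 hxc)]) ht))
  rw [show (0:ℝ) * ρ_c * (0 - 0) = 0 by ring] at h3
  have h4 : Tendsto (fun ε : ℝ =>
      ρ_c * (x - c)
        * (erfc ((x - c) / Real.sqrt (2 * t * ε)) - erfc ((x - a) / Real.sqrt (2 * t * ε))))
      (𝓝[>] 0) (𝓝 (ρ_c * (x - c) * (L - 0))) :=
    (hL.sub (tendsto_erfc_pos hB ht)).const_mul _
  rw [sub_zero] at h4
  have h5 : Tendsto (fun ε : ℝ =>
      ρ_d * Real.exp (-u_b / ε) * erfc (-(x - d) / Real.sqrt (2 * t * ε)))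
      (𝓝[>] 0) (𝓝 (ρ_d * 0 * 0)) :=
    ((tendsto_exp_div_eps (k := -u_b) (by linarith)).const_mul ρ_d).mul
      (tendsto_erfc_pos (k := -(x - d)) (by linarith) ht)
  rw [show ρ_d * (0:ℝ) * 0 = 0 by ring] at h5
  have h := ((((h1.add h2).add h3).add h4).add h5).div
    (D_tendsto hax hxb hua hub ht) sqrt_pi_ne
  rw [show (0:ℝ) + 0 + 0 + ρ_c * (x - c) * L + 0 = ρ_c * (x - c) * L by ring] at h
  exact h.congr fun ε => by simp only [Pi.div_apply]; rw [REps]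

end main

/-- Case `u_a < 0`, `u_b > 0`, regions `a < x < c` and `c < x < b`: as `ε → 0⁺`, the
approximate velocity tends to `0`, and the approximate potential density tends to
`ρ_c·(x − c)` in the first region and to `0` in the second. -/
theorem vanishing_viscosity_limit_middle_regions
    (a b c d u_a u_b ρ_c ρ_d : ℝ) (hac : a < c) (hcb : c < b) (hbd : b < d)
    (hua : u_a < 0) (hub : 0 < u_b) (t x : ℝ) (ht : 0 < t) :
    (a < x → x < c →
      Tendsto (fun ε : ℝ => uEps a b u_a u_b x t ε) (𝓝[>] 0) (𝓝 0)
      ∧ Tendsto (fun ε : ℝ => REps a b c d u_a u_b ρ_c ρ_d x t ε) (𝓝[>] 0)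
          (𝓝 (ρ_c * (x - c))))
    ∧ (c < x → x < b →
      Tendsto (fun ε : ℝ => uEps a b u_a u_b x t ε) (𝓝[>] 0) (𝓝 0)
      ∧ Tendsto (fun ε : ℝ => REps a b c d u_a u_b ρ_c ρ_d x t ε) (𝓝[>] 0) (𝓝 0)) := by
  constructor
  · intro hax hxc
    refine ⟨uEps_tendsto hax (by linarith) hua hub ht, ?_⟩
    have h := REps_tendsto (ρ_c := ρ_c) (ρ_d := ρ_d) (L := Real.sqrt π) hax
      (by linarith) hbd (ne_of_lt hxc) hua hub ht
      (tendsto_erfc_neg (k := x - c) (by linarith) ht)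
    rwa [mul_div_cancel_right₀ _ sqrt_pi_ne] at h
  · intro hcx hxb
    refine ⟨uEps_tendsto (by linarith) hxb hua hub ht, ?_⟩
    have h := REps_tendsto (ρ_c := ρ_c) (ρ_d := ρ_d) (L := (0:ℝ)) (by linarith : a < x)
      hxb hbd (ne_of_gt hcx) hua hub ht
      (tendsto_erfc_pos (k := x - c) (by linarith) ht)
    rwa [show ρ_c * (x - c) * 0 / Real.sqrt π = 0 by ring] at h
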